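/- There exists a temporal election in which, for the modified demand ᾱ(N') = min{β(N'), ℓ·|N'|/n}, no outcome satisfies the modified JR axiom: for every outcome o there is a group N' with ᾱ(N') ≥ 1 such that sat_i(o) = 0 for all i ∈ N'. Concretely, take 6 voters, candidates {x_T : T a 2-element subset of N} ∪ {y_1,...,y_6}, ℓ = 3 rounds, with s_{i,1} = {x_T : i ∈ T} and s_{i,2} = s_{i,3} = {y_i} for each voter i; then every pair of voters N' has β(N') = 1 and ℓ·|N'|/n = 1, yet for every outcome there is a pair of voters both with satisfaction 0. -/

import Mathlib

open Finset

/-- Satisfaction of voter `i` under outcome `o`: number of rounds `t` with `o t ∈ s i t`. -/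
def sat {V : Type*} {ℓ : ℕ} {P : Type*} [DecidableEq P]
    (s : V → Fin ℓ → Finset P) (o : Fin ℓ → P) (i : V) : ℕ :=
  (univ.filter fun t => o t ∈ s i t).card

/-- Agreement of a group `N'`: number of rounds in which all members approve a common candidate. -/
def agreement {V : Type*} {ℓ : ℕ} {P : Type*} [Fintype P] [DecidableEq P]
    (s : V → Fin ℓ → Finset P) (N' : Finset V) : ℕ :=
  (univ.filter fun t : Fin ℓ => ∃ p : P, ∀ i ∈ N', p ∈ s i t).card

/-- Demand `α(N') = ⌊β(N')·|N'|/n⌋`. -/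
def demand {V : Type*} [Fintype V] {ℓ : ℕ} {P : Type*} [Fintype P] [DecidableEq P]
    (s : V → Fin ℓ → Finset P) (N' : Finset V) : ℕ :=
  agreement s N' * N'.card / Fintype.card V

/-- Outcome `o` provides extended justified representation. -/
def EJR {V : Type*} [Fintype V] [DecidableEq V] {ℓ : ℕ} {P : Type*} [Fintype P] [DecidableEq P]
    (s : V → Fin ℓ → Finset P) (o : Fin ℓ → P) : Prop :=
  ∀ N' : Finset V, N'.Nonempty → ∃ i ∈ N', demand s N' ≤ sat s o i

/-- Outcome `o` provides proportional justified representation. -/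
def PJR {V : Type*} [Fintype V] [DecidableEq V] {ℓ : ℕ} {P : Type*} [Fintype P] [DecidableEq P]
    (s : V → Fin ℓ → Finset P) (o : Fin ℓ → P) : Prop :=
  ∀ N' : Finset V,
    demand s N' ≤ (univ.filter fun t : Fin ℓ => ∃ i ∈ N', o t ∈ s i t).card

/-- Outcome `o` provides justified representation. -/
def JR {V : Type*} [Fintype V] [DecidableEq V] {ℓ : ℕ} {P : Type*} [Fintype P] [DecidableEq P]
    (s : V → Fin ℓ → Finset P) (o : Fin ℓ → P) : Prop :=
  ∀ N' : Finset V, 0 < demand s N' → ∃ i ∈ N', 0 < sat s o i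

/-- The election of the example: 6 voters, candidates `x_T` for 2-element subsets `T`
(encoded as `Sum.inl T`) and `y_1,…,y_6` (encoded as `Sum.inr i`), 3 rounds. -/
def s6 : Fin 6 → Fin 3 → Finset (Finset (Fin 6) ⊕ Fin 6) :=
  fun i t =>
    if t = 0 then (univ.filter fun T : Finset (Fin 6) => i ∈ T ∧ T.card = 2).image Sum.inl
    else {Sum.inr i}

/-- in this election, for every outcome there is a group `N'` (a pair of voters)
with modified demand `ᾱ(N') = min{β(N'), ℓ·|N'|/n} ≥ 1` in which every voter has
satisfaction 0; hence the modified JR axiom is unsatisfiable. -/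
lemma agreement_pos {V : Type*} {ℓ : ℕ} {P : Type*} [Fintype P] [DecidableEq P]
    (s : V → Fin ℓ → Finset P) (N' : Finset V) (t : Fin ℓ)
    (h : ∃ p : P, ∀ i ∈ N', p ∈ s i t) : 0 < agreement s N' := by
  rw [agreement, Finset.card_pos]
  exact ⟨t, Finset.mem_filter.mpr ⟨mem_univ t, h⟩⟩

lemma mem_s6_zero (i : Fin 6) (p : Finset (Fin 6) ⊕ Fin 6) :
    p ∈ s6 i 0 ↔ ∃ T : Finset (Fin 6), i ∈ T ∧ T.card = 2 ∧ Sum.inl T = p := by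
  show p ∈ (univ.filter fun T : Finset (Fin 6) => i ∈ T ∧ T.card = 2).image Sum.inl ↔ _
  rw [Finset.mem_image]
  constructor
  · rintro ⟨T, hT, rfl⟩
    rw [Finset.mem_filter] at hT
    exact ⟨T, hT.2.1, hT.2.2, rfl⟩
  · rintro ⟨T, h1, h2, rfl⟩
    exact ⟨T, Finset.mem_filter.mpr ⟨mem_univ _, h1, h2⟩, rfl⟩

lemma s6_ne (i : Fin 6) (t : Fin 3) (ht : t ≠ 0) : s6 i t = {Sum.inr i} := by
  rw [s6, if_neg ht]

theorem modified_jr_unsatisfiable :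
    ∀ o : Fin 3 → Finset (Fin 6) ⊕ Fin 6,
      ∃ N' : Finset (Fin 6), N'.card = 2 ∧
        (1 : ℚ) ≤ min ((agreement s6 N' : ℚ)) ((3 * N'.card : ℚ) / 6) ∧
        ∀ i ∈ N', sat s6 o i = 0 := by
  intro o
  set A : Finset (Fin 6) := univ.filter fun i => sat s6 o i ≠ 0 with hA
  have hsub : A ⊆ (univ : Finset (Fin 3)).biUnion
      (fun t => univ.filter fun i : Fin 6 => o t ∈ s6 i t) := by
    intro i hi
    rw [hA, Finset.mem_filter] at hi
    simp only [mem_univ, true_and, sat] at hi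
    rw [← Nat.pos_iff_ne_zero, Finset.card_pos] at hi
    obtain ⟨t, ht⟩ := hi
    rw [Finset.mem_filter] at ht
    rw [Finset.mem_biUnion]
    exact ⟨t, mem_univ t, Finset.mem_filter.mpr ⟨mem_univ i, ht.2⟩⟩
  have h0 : (univ.filter fun i : Fin 6 => o 0 ∈ s6 i 0).card ≤ 2 := by
    rcases (univ.filter fun i : Fin 6 => o 0 ∈ s6 i 0).eq_empty_or_nonempty with he | ⟨j, hj⟩
    · simp [he]
    · rw [Finset.mem_filter, mem_s6_zero] at hj
      obtain ⟨_, T, hjT, hT2, hTo⟩ := hj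
      have hsubT : (univ.filter fun i : Fin 6 => o 0 ∈ s6 i 0) ⊆ T := by
        intro k hk
        rw [Finset.mem_filter, mem_s6_zero] at hk
        obtain ⟨_, T', hkT', _, hT'o⟩ := hk
        have : T' = T := Sum.inl.inj (hT'o.trans hTo.symm)
        exact this ▸ hkT'
      calc (univ.filter fun i : Fin 6 => o 0 ∈ s6 i 0).card ≤ T.card :=
            Finset.card_le_card hsubT
        _ = 2 := hT2
  have h12 : ∀ t : Fin 3, t ≠ 0 →
      (univ.filter fun i : Fin 6 => o t ∈ s6 i t).card ≤ 1 := by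
    intro t ht
    apply Finset.card_le_one.2
    intro a ha b hb
    rw [Finset.mem_filter, s6_ne _ _ ht, Finset.mem_singleton] at ha hb
    exact Sum.inr.inj (ha.2.symm.trans hb.2)
  have hAcard : A.card ≤ 4 := by
    calc A.card ≤ ∑ t : Fin 3, (univ.filter fun i : Fin 6 => o t ∈ s6 i t).card :=
          le_trans (Finset.card_le_card hsub) (Finset.card_biUnion_le)
      _ = (univ.filter fun i : Fin 6 => o 0 ∈ s6 i 0).card
          + (univ.filter fun i : Fin 6 => o 1 ∈ s6 i 1).card
          + (univ.filter fun i : Fin 6 => o 2 ∈ s6 i 2).card := by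
            rw [Fin.sum_univ_three]
      _ ≤ 2 + 1 + 1 :=
            Nat.add_le_add (Nat.add_le_add h0 (h12 1 (by decide))) (h12 2 (by decide))
      _ = 4 := rfl
  have hcompl : 1 < Aᶜ.card := by
    have h6 : A.card + Aᶜ.card = 6 := by
      rw [Finset.card_add_card_compl]; simp
    omega
  obtain ⟨a, ha, b, hb, hab⟩ := Finset.one_lt_card.mp hcompl
  have hsat : ∀ i ∈ Aᶜ, sat s6 o i = 0 := by
    intro i hi
    simp only [hA, Finset.mem_compl, mem_filter, mem_univ, true_and, not_not] at hi
    exact hi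
  refine ⟨{a, b}, Finset.card_pair hab, ?_, ?_⟩
  · apply le_min
    · have hag : 0 < agreement s6 {a, b} :=
        agreement_pos s6 {a, b} 0 ⟨Sum.inl {a, b}, fun i hi =>
          (mem_s6_zero i _).mpr ⟨{a, b}, hi, Finset.card_pair hab, rfl⟩⟩
      have : (1:ℚ) ≤ (agreement s6 {a, b} : ℚ) := by exact_mod_cast hag
      exact this
    · rw [Finset.card_pair hab]
      norm_num
  · intro i hi
    rcases Finset.mem_insert.mp hi with rfl | hi
    · exact hsat i ha
    · rw [Finset.mem_singleton.mp hi]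
      exact hsat b hb
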